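/- Assume additionally that the null p-values are super-uniform, i.e. P(p_i ≤ t) ≤ t for all t ∈ [0,1] and all i ∈ H_0. Then for any nondecreasing sequence of critical values τ = (τ_1, …, τ_m) ∈ [0,1]^m with τ_m < 1, the false discovery rate of the step-up procedure SU(τ) satisfies FDR(SU(τ)) ≤ max_{1 ≤ k ≤ m} ((m−k+1)/(1−τ_m)) · (τ_k/k). -/

import Mathlib

open MeasureTheory ProbabilityTheory Finset

noncomputable def numRejSU (m : ℕ) (τ : ℕ → ℝ) (q : Fin m → ℝ) : ℕ :=
  sSup {k | k ≤ m ∧ k ≤ (univ.filter (fun j => q j ≤ τ k)).card}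

noncomputable def rejSU (m : ℕ) (τ : ℕ → ℝ) (q : Fin m → ℝ) : Finset (Fin m) :=
  univ.filter (fun i => q i ≤ τ (numRejSU m τ q))

noncomputable def FDP (m : ℕ) (H0 R : Finset (Fin m)) : ℝ :=
  ((R ∩ H0).card : ℝ) / max (R.card : ℝ) 1

section Aux

variable {m : ℕ} {τ : ℕ → ℝ} {q : Fin m → ℝ}

lemma suSet_bdd : BddAbove {k | k ≤ m ∧ k ≤ (univ.filter (fun j => q j ≤ τ k)).card} :=
  ⟨m, fun _ hk => hk.1⟩

lemma numRejSU_mem :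
    numRejSU m τ q ∈ {k | k ≤ m ∧ k ≤ (univ.filter (fun j => q j ≤ τ k)).card} :=
  Nat.sSup_mem ⟨0, Nat.zero_le _, Nat.zero_le _⟩ suSet_bdd

lemma numRejSU_le : numRejSU m τ q ≤ m := numRejSU_mem.1

lemma numRejSU_le_card :
    numRejSU m τ q ≤ (univ.filter (fun j => q j ≤ τ (numRejSU m τ q))).card :=
  numRejSU_mem.2

lemma le_numRejSU {k : ℕ} (hk : k ≤ m)
    (h : k ≤ (univ.filter (fun j => q j ≤ τ k)).card) : k ≤ numRejSU m τ q :=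
  le_csSup suSet_bdd ⟨hk, h⟩

lemma numRejSU_eq_findGreatest (m : ℕ) (τ : ℕ → ℝ) (q : Fin m → ℝ) :
    numRejSU m τ q
      = Nat.findGreatest (fun k => k ≤ (univ.filter (fun j => q j ≤ τ k)).card) m := by
  refine le_antisymm (Nat.le_findGreatest numRejSU_le numRejSU_le_card) ?_
  refine le_numRejSU (Nat.findGreatest_le m) ?_
  exact Nat.findGreatest_spec (P := fun k => k ≤ (univ.filter (fun j => q j ≤ τ k)).card)
    (Nat.zero_le m) (Nat.zero_le _)

lemma card_le_card_of_tau_le {k l : ℕ} (h : τ k ≤ τ l) :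
    (univ.filter (fun j => q j ≤ τ k)).card ≤ (univ.filter (fun j => q j ≤ τ l)).card :=
  Finset.card_le_card (fun j hj => by
    simp only [Finset.mem_filter] at hj ⊢
    exact ⟨hj.1, le_trans hj.2 h⟩)

lemma card_numRejSU_eq (hτmono : ∀ k l, k ≤ l → l ≤ m → τ k ≤ τ l) :
    (univ.filter (fun j => q j ≤ τ (numRejSU m τ q))).card = numRejSU m τ q := by
  refine le_antisymm ?_ numRejSU_le_card
  rcases eq_or_lt_of_le (numRejSU_le (τ := τ) (q := q)) with h | h
  · calc (univ.filter (fun j => q j ≤ τ (numRejSU m τ q))).card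
        ≤ univ.card := Finset.card_filter_le _ _
      _ = m := by simp
      _ = numRejSU m τ q := h.symm
  · have h1 : (univ.filter (fun j => q j ≤ τ (numRejSU m τ q))).card
        ≤ (univ.filter (fun j => q j ≤ τ (numRejSU m τ q + 1))).card :=
      card_le_card_of_tau_le (hτmono _ _ (Nat.le_succ _) h)
    have h2 : ¬ (numRejSU m τ q + 1
        ≤ (univ.filter (fun j => q j ≤ τ (numRejSU m τ q + 1))).card) := by
      intro hc
      exact absurd (le_numRejSU h hc) (by omega)
    omega

lemma rejSU_card (hτmono : ∀ k l, k ≤ l → l ≤ m → τ k ≤ τ l) :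
    (rejSU m τ q).card = numRejSU m τ q := card_numRejSU_eq hτmono

lemma one_le_numRejSU (hm : 1 ≤ m) (i : Fin m) (hi : q i ≤ τ 1) :
    1 ≤ numRejSU m τ q := by
  refine le_numRejSU hm ?_
  exact Finset.card_pos.mpr ⟨i, Finset.mem_filter.mpr ⟨Finset.mem_univ i, hi⟩⟩

end Aux

section Aux2

variable {m : ℕ} {τ : ℕ → ℝ} {q : Fin m → ℝ} {i : Fin m}

/-- If `q i ≤ τ k`, replacing `q i` by `0` does not change the count at level `k`
(provided `0 ≤ τ k`). -/
lemma filter_update_eq (hτk : 0 ≤ τ k) (hqi : q i ≤ τ k) :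
    (univ.filter (fun j => Function.update q i 0 j ≤ τ k))
      = (univ.filter (fun j => q j ≤ τ k)) := by
  apply Finset.filter_congr
  intro j _
  rcases eq_or_ne j i with rfl | hj
  · simp [Function.update_self, hτk, hqi]
  · simp [Function.update_of_ne hj]

lemma card_le_card_update (hτk : 0 ≤ τ k) :
    (univ.filter (fun j => q j ≤ τ k)).card
      ≤ (univ.filter (fun j => Function.update q i 0 j ≤ τ k)).card := by
  apply Finset.card_le_card
  intro j hj
  simp only [Finset.mem_filter, Finset.mem_univ, true_and] at hj ⊢
  rcases eq_or_ne j i with rfl | hne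
  · simpa [Function.update_self] using hτk
  · simpa [Function.update_of_ne hne] using hj

variable (hm : 1 ≤ m) (hτ0 : τ 0 = 0)
  (hτmono : ∀ k l, k ≤ l → l ≤ m → τ k ≤ τ l)
  (hτ01 : ∀ k ≤ m, τ k ∈ Set.Icc (0 : ℝ) 1)

include hm hτ0 hτmono hτ01 in
lemma numRejSU_pos_of_le (hq0 : 0 ≤ q i) (h : q i ≤ τ (numRejSU m τ q)) :
    1 ≤ numRejSU m τ q := by
  by_contra hn
  have hn0 : numRejSU m τ q = 0 := by omega
  rw [hn0, hτ0] at h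
  have : q i ≤ τ 1 := by
    have := hτmono 0 1 (Nat.zero_le _) hm
    rw [hτ0] at this
    linarith
  exact absurd (one_le_numRejSU hm i this) (by omega)

include hm hτ0 hτmono hτ01 in
/-- Key leave-one-out lemma part 1: if `q i` is rejected then replacing `q i` by `0`
does not change the number of rejections. -/
lemma numRejSU_update_eq (hq0 : 0 ≤ q i) (h : q i ≤ τ (numRejSU m τ q)) :
    numRejSU m τ (Function.update q i 0) = numRejSU m τ q := by
  set n := numRejSU m τ q with hn
  set K := numRejSU m τ (Function.update q i 0) with hK
  have hnm : n ≤ m := numRejSU_le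
  have hKm : K ≤ m := numRejSU_le
  have hnK : n ≤ K :=
    le_numRejSU hnm (le_trans numRejSU_le_card (card_le_card_update (hτ01 n hnm).1))
  have hqiK : q i ≤ τ K := le_trans h (hτmono n K hnK hKm)
  have hKn : K ≤ n := by
    refine le_numRejSU hKm ?_
    calc K ≤ (univ.filter (fun j => Function.update q i 0 j ≤ τ K)).card :=
          numRejSU_le_card
      _ = (univ.filter (fun j => q j ≤ τ K)).card := by
          rw [filter_update_eq (hτ01 K hKm).1 hqiK]
  omega

include hm hτ0 hτmono hτ01 in
/-- Key leave-one-out lemma part 2. -/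
lemma le_tau_numRejSU_of_update (hq0 : 0 ≤ q i)
    (h : q i ≤ τ (numRejSU m τ (Function.update q i 0))) :
    q i ≤ τ (numRejSU m τ q) := by
  set K := numRejSU m τ (Function.update q i 0) with hK
  have hKm : K ≤ m := numRejSU_le
  have hKn : K ≤ numRejSU m τ q := by
    refine le_numRejSU hKm ?_
    calc K ≤ (univ.filter (fun j => Function.update q i 0 j ≤ τ K)).card :=
          numRejSU_le_card
      _ = (univ.filter (fun j => q j ≤ τ K)).card := by
          rw [filter_update_eq (hτ01 K hKm).1 h]
  exact le_trans h (hτmono K _ hKn numRejSU_le)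

include hτmono hτ01 in
/-- Key counting lemma: if `q i > τ m`, then the number of p-values exceeding `τ m`
is at most `m - K_i + 1`. -/
lemma card_gt_le (hqi : τ m < q i) :
    (univ.filter (fun j => τ m < q j)).card
      ≤ m - numRejSU m τ (Function.update q i 0) + 1 := by
  set K := numRejSU m τ (Function.update q i 0) with hK
  have hKm : K ≤ m := numRejSU_le
  have hcard : (univ.filter (fun j => Function.update q i 0 j ≤ τ K)).card = K :=
    card_numRejSU_eq hτmono
  have hneg : (univ.filter (fun j => ¬ Function.update q i 0 j ≤ τ K)).card = m - K := by
    have := Finset.card_filter_add_card_filter_not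
      (s := (univ : Finset (Fin m))) (fun j => Function.update q i 0 j ≤ τ K)
    simp only [Finset.card_univ, Fintype.card_fin] at this
    omega
  have hsub : (univ.filter (fun j => τ m < q j))
      ⊆ insert i (univ.filter (fun j => ¬ Function.update q i 0 j ≤ τ K)) := by
    intro j hj
    simp only [Finset.mem_filter, Finset.mem_univ, true_and] at hj
    rcases eq_or_ne j i with rfl | hne
    · exact Finset.mem_insert_self _ _
    · refine Finset.mem_insert_of_mem ?_
      simp only [Finset.mem_filter, Finset.mem_univ, true_and, Function.update_of_ne hne]
      have : τ K ≤ τ m := hτmono K m hKm le_rfl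
      linarith
  calc (univ.filter (fun j => τ m < q j)).card
      ≤ (insert i (univ.filter (fun j => ¬ Function.update q i 0 j ≤ τ K))).card :=
        Finset.card_le_card hsub
    _ ≤ (univ.filter (fun j => ¬ Function.update q i 0 j ≤ τ K)).card + 1 :=
        Finset.card_insert_le _ _
    _ = m - K + 1 := by rw [hneg]

end Aux2

section Aux3

variable {m : ℕ} {τ : ℕ → ℝ} {q : Fin m → ℝ}
variable (hm : 1 ≤ m) (hτ0 : τ 0 = 0)
  (hτmono : ∀ k l, k ≤ l → l ≤ m → τ k ≤ τ l)
  (hτ01 : ∀ k ≤ m, τ k ∈ Set.Icc (0 : ℝ) 1)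

include hm hτ01 in
lemma numRejSU_update_mem (i : Fin m) :
    numRejSU m τ (Function.update q i 0) ∈ Finset.Icc 1 m := by
  rw [Finset.mem_Icc]
  refine ⟨one_le_numRejSU hm i ?_, numRejSU_le⟩
  rw [Function.update_self]
  exact (hτ01 1 hm).1

include hm hτ01 in
lemma suSumCollapse (i : Fin m) (c : ℕ → Prop) [DecidablePred c] (x : ℕ → ℝ) :
    (∑ k ∈ Finset.Icc 1 m,
      if numRejSU m τ (Function.update q i 0) = k ∧ c k then x k else 0)
    = if c (numRejSU m τ (Function.update q i 0)) then
        x (numRejSU m τ (Function.update q i 0)) else 0 := by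
  rw [Finset.sum_eq_single_of_mem (numRejSU m τ (Function.update q i 0))
    (numRejSU_update_mem hm hτ01 i)]
  · simp
  · intro b _ hb
    rw [if_neg]
    rintro ⟨h1, -⟩
    exact hb h1.symm

include hm hτ0 hτmono hτ01 in
lemma FDP_rejSU_eq (hq01 : ∀ j, q j ∈ Set.Icc (0 : ℝ) 1) (H0 : Finset (Fin m)) :
    FDP m H0 (rejSU m τ q)
      = ∑ i ∈ H0, ∑ k ∈ Finset.Icc 1 m,
          (if numRejSU m τ (Function.update q i 0) = k ∧ q i ≤ τ k
            then (k : ℝ)⁻¹ else 0) := by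
  have hcoll : ∀ i ∈ H0, (∑ k ∈ Finset.Icc 1 m,
      if numRejSU m τ (Function.update q i 0) = k ∧ q i ≤ τ k then (k : ℝ)⁻¹ else 0)
      = if q i ≤ τ (numRejSU m τ (Function.update q i 0)) then
          ((numRejSU m τ (Function.update q i 0) : ℝ))⁻¹ else 0 := fun i _ =>
    suSumCollapse hm hτ01 i (fun k => q i ≤ τ k) (fun k => (k : ℝ)⁻¹)
  rw [Finset.sum_congr rfl hcoll]
  by_cases hn1 : 1 ≤ numRejSU m τ q
  · set n := numRejSU m τ q with hn
    have hcard : (rejSU m τ q).card = n := rejSU_card hτmono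
    have hmax : max ((rejSU m τ q).card : ℝ) 1 = (n : ℝ) := by
      rw [hcard]
      exact max_eq_left (by exact_mod_cast hn1)
    have hinter : rejSU m τ q ∩ H0 = H0.filter (fun i => q i ≤ τ n) := by
      ext j
      simp only [Finset.mem_inter, Finset.mem_filter, rejSU, Finset.mem_univ, true_and, ← hn]
      tauto
    rw [FDP, hmax, hinter, Finset.card_filter]
    push_cast
    rw [Finset.sum_div]
    refine Finset.sum_congr rfl (fun i _ => ?_)
    by_cases hqi : q i ≤ τ n
    · have hKi : numRejSU m τ (Function.update q i 0) = n :=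
        numRejSU_update_eq hm hτ0 hτmono hτ01 (hq01 i).1 hqi
      rw [hKi, if_pos hqi, if_pos hqi]
      simp [div_eq_mul_inv]
    · have hKi : ¬ q i ≤ τ (numRejSU m τ (Function.update q i 0)) := by
        intro hc
        exact hqi (le_tau_numRejSU_of_update hm hτ0 hτmono hτ01 (hq01 i).1 hc)
      rw [if_neg hqi, if_neg hKi]
      simp
  · have hrej : rejSU m τ q = ∅ := by
      rw [Finset.eq_empty_iff_forall_notMem]
      intro j hj
      simp only [rejSU, Finset.mem_filter, Finset.mem_univ, true_and] at hj
      exact hn1 (numRejSU_pos_of_le hm hτ0 hτmono hτ01 (hq01 j).1 hj)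
    rw [hrej]
    have : ∀ i ∈ H0, (if q i ≤ τ (numRejSU m τ (Function.update q i 0)) then
        ((numRejSU m τ (Function.update q i 0) : ℝ))⁻¹ else 0) = 0 := by
      intro i _
      rw [if_neg]
      intro hc
      exact hn1 (numRejSU_pos_of_le hm hτ0 hτmono hτ01 (hq01 i).1
        (le_tau_numRejSU_of_update hm hτ0 hτmono hτ01 (hq01 i).1 hc))
    rw [Finset.sum_congr rfl this]
    simp [FDP]

include hm hτmono hτ01 in
lemma sumD_le_one (H0 : Finset (Fin m)) :
    ∑ i ∈ H0, ∑ k ∈ Finset.Icc 1 m,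
      (if numRejSU m τ (Function.update q i 0) = k ∧ τ m < q i
        then ((m - k + 1 : ℕ) : ℝ)⁻¹ else 0) ≤ 1 := by
  have hcoll : ∀ i ∈ H0, (∑ k ∈ Finset.Icc 1 m,
      if numRejSU m τ (Function.update q i 0) = k ∧ τ m < q i
        then ((m - k + 1 : ℕ) : ℝ)⁻¹ else 0)
      = if τ m < q i then ((m - numRejSU m τ (Function.update q i 0) + 1 : ℕ) : ℝ)⁻¹
          else 0 := fun i _ =>
    suSumCollapse hm hτ01 i (fun _ => τ m < q i) (fun k => ((m - k + 1 : ℕ) : ℝ)⁻¹)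
  rw [Finset.sum_congr rfl hcoll]
  set N := (univ.filter (fun j => τ m < q j)).card with hN
  by_cases hN0 : N = 0
  · have hempty : (univ.filter (fun j => τ m < q j)) = ∅ := Finset.card_eq_zero.mp hN0
    have : ∀ i ∈ H0, (if τ m < q i then
        ((m - numRejSU m τ (Function.update q i 0) + 1 : ℕ) : ℝ)⁻¹ else 0) = 0 := by
      intro i _
      rw [if_neg]
      intro hc
      have : i ∈ univ.filter (fun j => τ m < q j) :=
        Finset.mem_filter.mpr ⟨Finset.mem_univ i, hc⟩
      simp [hempty] at this
    rw [Finset.sum_congr rfl this]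
    simp
  · have hN1 : 1 ≤ N := Nat.one_le_iff_ne_zero.mpr hN0
    have hstep : ∀ i ∈ H0, (if τ m < q i then
        ((m - numRejSU m τ (Function.update q i 0) + 1 : ℕ) : ℝ)⁻¹ else 0)
        ≤ (if τ m < q i then (N : ℝ)⁻¹ else 0) := by
      intro i _
      by_cases hqi : τ m < q i
      · rw [if_pos hqi, if_pos hqi]
        have hle : N ≤ m - numRejSU m τ (Function.update q i 0) + 1 :=
          card_gt_le hτmono hτ01 hqi
        have h1 : (0 : ℝ) < (N : ℝ) := by exact_mod_cast hN1
        exact inv_anti₀ h1 (by exact_mod_cast hle)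
      · rw [if_neg hqi, if_neg hqi]
    refine le_trans (Finset.sum_le_sum hstep) ?_
    rw [← Finset.sum_filter, Finset.sum_const]
    have hcard : (H0.filter (fun i => τ m < q i)).card ≤ N := by
      rw [hN]
      exact Finset.card_le_card (Finset.filter_subset_filter _ (Finset.subset_univ H0))
    have h1 : (0 : ℝ) < (N : ℝ) := by exact_mod_cast hN1
    calc (H0.filter (fun i => τ m < q i)).card • ((N : ℝ))⁻¹
        = ((H0.filter (fun i => τ m < q i)).card : ℝ) * ((N : ℝ))⁻¹ := by
          rw [nsmul_eq_mul]
      _ ≤ (N : ℝ) * ((N : ℝ))⁻¹ := by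
          apply mul_le_mul_of_nonneg_right (by exact_mod_cast hcard)
          positivity
      _ = 1 := mul_inv_cancel₀ (ne_of_gt h1)

end Aux3

section AuxMeas

lemma measurable_suCount (m : ℕ) (t : ℝ) :
    Measurable (fun q : Fin m → ℝ => (univ.filter (fun j => q j ≤ t)).card) := by
  have h : (fun q : Fin m → ℝ => (univ.filter (fun j => q j ≤ t)).card)
      = fun q => ∑ j : Fin m, if q j ≤ t then 1 else 0 := by
    funext q
    rw [Finset.card_filter]
  rw [h]
  refine Finset.measurable_sum _ (fun j _ => ?_)
  refine Measurable.ite ?_ measurable_const measurable_const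
  exact measurableSet_le (measurable_pi_apply j) measurable_const

lemma measurable_findGreatest_suCount (m : ℕ) (τ : ℕ → ℝ) (n : ℕ) :
    Measurable (fun q : Fin m → ℝ =>
      Nat.findGreatest (fun k => k ≤ (univ.filter (fun j => q j ≤ τ k)).card) n) := by
  induction n with
  | zero => simpa using measurable_const
  | succ n ih =>
      have h2 : (fun q : Fin m → ℝ =>
          Nat.findGreatest (fun k => k ≤ (univ.filter (fun j => q j ≤ τ k)).card) (n+1))
          = fun q => if (n+1) ≤ (univ.filter (fun j => q j ≤ τ (n+1))).card then n+1
              else Nat.findGreatest (fun k => k ≤ (univ.filter (fun j => q j ≤ τ k)).card) n := by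
        funext q
        rw [Nat.findGreatest_succ]
      rw [h2]
      refine Measurable.ite ?_ measurable_const ih
      exact (measurable_suCount m (τ (n+1))) MeasurableSet.of_discrete

lemma measurable_numRejSU (m : ℕ) (τ : ℕ → ℝ) :
    Measurable (numRejSU m τ) := by
  have h : numRejSU m τ = fun q =>
      Nat.findGreatest (fun k => k ≤ (univ.filter (fun j => q j ≤ τ k)).card) m :=
    funext (numRejSU_eq_findGreatest m τ)
  rw [h]
  exact measurable_findGreatest_suCount m τ m

end AuxMeas

/-- under super-uniform null p-values and `τ_m < 1`,
`FDR(SU(τ)) ≤ max_{1 ≤ k ≤ m} ((m-k+1)/(1-τ_m)) · (τ_k/k)`. -/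
theorem fdr_su_superuniform_adaptive_bound
    {Ω : Type*} [MeasurableSpace Ω] (P : Measure Ω) [IsProbabilityMeasure P]
    (m : ℕ) (hm : 1 ≤ m)
    (p : Fin m → Ω → ℝ) (hmeas : ∀ i, Measurable (p i))
    (hp01 : ∀ i ω, p i ω ∈ Set.Icc (0 : ℝ) 1)
    (hindep : iIndepFun p P)
    (H0 : Finset (Fin m))
    (hnull : ∀ i ∈ H0, ∀ t ∈ Set.Icc (0 : ℝ) 1,
      P {ω | p i ω ≤ t} ≤ ENNReal.ofReal t)
    (τ : ℕ → ℝ) (hτ0 : τ 0 = 0)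
    (hτmono : ∀ k l, k ≤ l → l ≤ m → τ k ≤ τ l)
    (hτ01 : ∀ k ≤ m, τ k ∈ Set.Icc (0 : ℝ) 1)
    (hτm : τ m < 1) :
    ∫ ω, FDP m H0 (rejSU m τ (fun j => p j ω)) ∂P
      ≤ (Finset.Icc 1 m).sup' (Finset.nonempty_Icc.mpr hm)
          (fun k => ((m - k + 1 : ℕ) : ℝ) / (1 - τ m) * (τ k / (k : ℝ))) := by
  classical
  have hτm0 : 0 < 1 - τ m := by linarith
  set B0 : ℝ := (Finset.Icc 1 m).sup' (Finset.nonempty_Icc.mpr hm)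
      (fun k => ((m - k + 1 : ℕ) : ℝ) / (1 - τ m) * (τ k / (k : ℝ))) with hB0
  -- the leave-one-out rejection count
  set K : Fin m → Ω → ℕ :=
    fun i ω => numRejSU m τ (Function.update (fun j => p j ω) i 0) with hKdef
  have hKmeas : ∀ i, Measurable (K i) := by
    intro i
    apply (measurable_numRejSU m τ).comp
    apply measurable_pi_lambda
    intro j
    have : (fun ω => Function.update (fun j' => p j' ω) i 0 j)
        = fun ω => if j = i then 0 else p j ω := by
      funext ω
      rw [Function.update_apply]
    rw [this]
    by_cases hj : j = i
    · simp only [hj, if_pos rfl]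
      exact measurable_const
    · simp only [hj, if_neg hj]
      exact hmeas j
  -- independence of p i and K i
  have hKindep : ∀ i : Fin m, IndepFun (p i) (K i) P := by
    intro i
    have hdisj : Disjoint ({i} : Finset (Fin m)) ({i}ᶜ : Finset (Fin m)) :=
      disjoint_compl_right
    have hbase := hindep.indepFun_finset {i} ({i}ᶜ) hdisj hmeas
    have hφ : Measurable (fun v : (({i} : Finset (Fin m)) → ℝ)
        => v ⟨i, Finset.mem_singleton_self i⟩) := measurable_pi_apply _
    have hψ : Measurable (fun v : ((({i}ᶜ : Finset (Fin m)) : Finset (Fin m)) → ℝ)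
        => numRejSU m τ (fun j =>
            if hj : j ∈ ({i}ᶜ : Finset (Fin m)) then v ⟨j, hj⟩ else 0)) := by
      apply (measurable_numRejSU m τ).comp
      apply measurable_pi_lambda
      intro j
      by_cases hj : j ∈ ({i}ᶜ : Finset (Fin m))
      · simp only [dif_pos hj]
        exact measurable_pi_apply _
      · simp only [dif_neg hj]
        exact measurable_const
    have hcomp := hbase.comp hφ hψ
    have h1 : (fun v : (({i} : Finset (Fin m)) → ℝ) => v ⟨i, Finset.mem_singleton_self i⟩)
        ∘ (fun a (j : ({i} : Finset (Fin m))) => p j a) = p i := by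
      funext ω
      rfl
    have h2 : (fun v : ((({i}ᶜ : Finset (Fin m)) : Finset (Fin m)) → ℝ)
        => numRejSU m τ (fun j =>
            if hj : j ∈ ({i}ᶜ : Finset (Fin m)) then v ⟨j, hj⟩ else 0))
        ∘ (fun a (j : (({i}ᶜ : Finset (Fin m)) : Finset (Fin m))) => p j a) = K i := by
      funext ω
      show numRejSU m τ _ = numRejSU m τ _
      congr 1
      funext j
      by_cases hj : j = i
      · subst hj
        rw [dif_neg (by simp), Function.update_self]
      · rw [dif_pos (Finset.mem_compl.mpr (by simp [hj])),
          Function.update_of_ne hj]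
    rw [h1, h2] at hcomp
    exact hcomp
  -- basic measurable sets
  have hAset : ∀ i k, MeasurableSet ((p i) ⁻¹' (Set.Iic (τ k))) :=
    fun i k => (hmeas i) measurableSet_Iic
  have hBset : ∀ i k, MeasurableSet ((K i) ⁻¹' {k}) :=
    fun i k => (hKmeas i) MeasurableSet.of_discrete
  have hCset : ∀ i, MeasurableSet ((p i) ⁻¹' (Set.Ioi (τ m))) :=
    fun i => (hmeas i) measurableSet_Ioi
  -- product formula
  have hprod : ∀ (i : Fin m) (k : ℕ) (s : Set ℝ), MeasurableSet s →
      P ((p i) ⁻¹' s ∩ (K i) ⁻¹' {k}) = P ((p i) ⁻¹' s) * P ((K i) ⁻¹' {k}) :=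
    fun i k s hs => (hKindep i).measure_inter_preimage_eq_mul s {k} hs
      MeasurableSet.of_discrete
  -- generic sum-to-integral identity
  have intEq : ∀ (S : Fin m → ℕ → Set Ω), (∀ i k, MeasurableSet (S i k)) →
      ∀ (c : ℕ → ℝ),
      (∫ ω, ∑ i ∈ H0, ∑ k ∈ Finset.Icc 1 m,
        Set.indicator (S i k) (fun _ => c k) ω ∂P)
      = ∑ i ∈ H0, ∑ k ∈ Finset.Icc 1 m, c k * (P (S i k)).toReal := by
    intro S hS c
    rw [integral_finset_sum _ (fun i _ => integrable_finset_sum _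
      (fun k _ => (integrable_const (c k)).indicator (hS i k)))]
    refine Finset.sum_congr rfl fun i _ => ?_
    rw [integral_finset_sum _ (fun k _ => (integrable_const (c k)).indicator (hS i k))]
    refine Finset.sum_congr rfl fun k _ => ?_
    rw [integral_indicator_const (c k) (hS i k), smul_eq_mul, mul_comm, measureReal_def]
  -- Step 1: rewrite the FDR as a double sum of measures
  have hpt : (fun ω => FDP m H0 (rejSU m τ (fun j => p j ω)))
      = fun ω => ∑ i ∈ H0, ∑ k ∈ Finset.Icc 1 m,
          Set.indicator ((K i) ⁻¹' {k} ∩ (p i) ⁻¹' (Set.Iic (τ k)))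
            (fun _ => (k : ℝ)⁻¹) ω := by
    funext ω
    rw [FDP_rejSU_eq hm hτ0 hτmono hτ01 (fun j => hp01 j ω) H0]
    refine Finset.sum_congr rfl fun i _ => Finset.sum_congr rfl fun k _ => ?_
    by_cases h : numRejSU m τ (Function.update (fun j => p j ω) i 0) = k ∧ p i ω ≤ τ k
    · rw [if_pos h]
      exact (Set.indicator_of_mem
        (show ω ∈ (K i) ⁻¹' {k} ∩ (p i) ⁻¹' (Set.Iic (τ k)) from ⟨h.1, h.2⟩)
        (fun _ => (k : ℝ)⁻¹)).symm
    · rw [if_neg h]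
      exact (Set.indicator_of_notMem
        (show ω ∉ (K i) ⁻¹' {k} ∩ (p i) ⁻¹' (Set.Iic (τ k)) from
          fun hc => h ⟨hc.1, hc.2⟩)
        (fun _ => (k : ℝ)⁻¹)).symm
  rw [hpt, intEq _ (fun i k => (hBset i k).inter (hAset i k)) _]
  -- Step 2: per-term bound
  have key : ∀ i ∈ H0, ∀ k ∈ Finset.Icc 1 m,
      (k : ℝ)⁻¹ * (P ((K i) ⁻¹' {k} ∩ (p i) ⁻¹' (Set.Iic (τ k)))).toReal
      ≤ B0 * (((m - k + 1 : ℕ) : ℝ)⁻¹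
          * (P ((K i) ⁻¹' {k} ∩ (p i) ⁻¹' (Set.Ioi (τ m)))).toReal) := by
    intro i hi k hk
    rw [Finset.mem_Icc] at hk
    have hd : (0 : ℝ) < ((m - k + 1 : ℕ) : ℝ) :=
      Nat.cast_pos.mpr (Nat.succ_pos _)
    have hka : (0 : ℝ) < (k : ℝ) := by exact_mod_cast hk.1
    have hτk := hτ01 k hk.2
    -- measure computations
    have hPA : (P ((p i) ⁻¹' (Set.Iic (τ k)))).toReal ≤ τ k := by
      have h1 : P ((p i) ⁻¹' (Set.Iic (τ k))) ≤ ENNReal.ofReal (τ k) :=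
        hnull i hi (τ k) hτk
      calc (P ((p i) ⁻¹' (Set.Iic (τ k)))).toReal
          ≤ (ENNReal.ofReal (τ k)).toReal :=
            ENNReal.toReal_mono ENNReal.ofReal_ne_top h1
        _ = τ k := ENNReal.toReal_ofReal hτk.1
    have hPC : 1 - τ m ≤ (P ((p i) ⁻¹' (Set.Ioi (τ m)))).toReal := by
      have hcompl : (p i) ⁻¹' (Set.Ioi (τ m)) = ((p i) ⁻¹' (Set.Iic (τ m)))ᶜ := by
        rw [← Set.preimage_compl, Set.compl_Iic]
      have hPAm : (P ((p i) ⁻¹' (Set.Iic (τ m)))).toReal ≤ τ m := by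
        have h1 : P ((p i) ⁻¹' (Set.Iic (τ m))) ≤ ENNReal.ofReal (τ m) :=
          hnull i hi (τ m) (hτ01 m le_rfl)
        calc (P ((p i) ⁻¹' (Set.Iic (τ m)))).toReal
            ≤ (ENNReal.ofReal (τ m)).toReal :=
              ENNReal.toReal_mono ENNReal.ofReal_ne_top h1
          _ = τ m := ENNReal.toReal_ofReal (hτ01 m le_rfl).1
      rw [hcompl, prob_compl_eq_one_sub (hAset i m),
        ENNReal.toReal_sub_of_le prob_le_one ENNReal.one_ne_top, ENNReal.toReal_one]
      linarith
    have hPB0 : (0 : ℝ) ≤ (P ((K i) ⁻¹' {k})).toReal := ENNReal.toReal_nonneg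
    -- independence splits
    have hsplitA : (P ((K i) ⁻¹' {k} ∩ (p i) ⁻¹' (Set.Iic (τ k)))).toReal
        = (P ((p i) ⁻¹' (Set.Iic (τ k)))).toReal * (P ((K i) ⁻¹' {k})).toReal := by
      rw [Set.inter_comm, hprod i k _ measurableSet_Iic, ENNReal.toReal_mul]
    have hsplitC : (P ((K i) ⁻¹' {k} ∩ (p i) ⁻¹' (Set.Ioi (τ m)))).toReal
        = (P ((p i) ⁻¹' (Set.Ioi (τ m)))).toReal * (P ((K i) ⁻¹' {k})).toReal := by
      rw [Set.inter_comm, hprod i k _ measurableSet_Ioi, ENNReal.toReal_mul]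
    rw [hsplitA, hsplitC]
    set a := (P ((p i) ⁻¹' (Set.Iic (τ k)))).toReal with ha
    set b := (P ((K i) ⁻¹' {k})).toReal with hb
    set c := (P ((p i) ⁻¹' (Set.Ioi (τ m)))).toReal with hc
    have ha0 : 0 ≤ a := ENNReal.toReal_nonneg
    -- the sup' bound
    have hB0ge : ((m - k + 1 : ℕ) : ℝ) / (1 - τ m) * (τ k / (k : ℝ)) ≤ B0 := by
      rw [hB0]
      exact Finset.le_sup' (fun k => ((m - k + 1 : ℕ) : ℝ) / (1 - τ m) * (τ k / (k : ℝ)))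
        (Finset.mem_Icc.mpr hk)
    have hkey2 : τ k / (k : ℝ)
        ≤ B0 * ((1 - τ m) * (((m - k + 1 : ℕ) : ℝ))⁻¹) := by
      have heq : ((1 - τ m) * (((m - k + 1 : ℕ) : ℝ))⁻¹)
          * (((m - k + 1 : ℕ) : ℝ) / (1 - τ m) * (τ k / (k : ℝ))) = τ k / (k : ℝ) := by
        field_simp
      calc τ k / (k : ℝ)
          = ((1 - τ m) * (((m - k + 1 : ℕ) : ℝ))⁻¹)
            * (((m - k + 1 : ℕ) : ℝ) / (1 - τ m) * (τ k / (k : ℝ))) := heq.symm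
        _ ≤ ((1 - τ m) * (((m - k + 1 : ℕ) : ℝ))⁻¹) * B0 := by
            apply mul_le_mul_of_nonneg_left hB0ge
            exact mul_nonneg hτm0.le (inv_nonneg.mpr hd.le)
        _ = B0 * ((1 - τ m) * (((m - k + 1 : ℕ) : ℝ))⁻¹) := by ring
    calc (k : ℝ)⁻¹ * (a * b)
        = (a * (k : ℝ)⁻¹) * b := by ring
      _ ≤ (τ k * (k : ℝ)⁻¹) * b := by
          apply mul_le_mul_of_nonneg_right _ hPB0
          exact mul_le_mul_of_nonneg_right hPA (inv_nonneg.mpr hka.le)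
      _ = (τ k / (k : ℝ)) * b := by rw [div_eq_mul_inv]
      _ ≤ (B0 * ((1 - τ m) * (((m - k + 1 : ℕ) : ℝ))⁻¹)) * b :=
          mul_le_mul_of_nonneg_right hkey2 hPB0
      _ = (B0 * (((m - k + 1 : ℕ) : ℝ))⁻¹) * ((1 - τ m) * b) := by ring
      _ ≤ (B0 * (((m - k + 1 : ℕ) : ℝ))⁻¹) * (c * b) := by
          apply mul_le_mul_of_nonneg_left
            (mul_le_mul_of_nonneg_right hPC hPB0)
          have hB0nn' : 0 ≤ B0 :=
            le_trans (mul_nonneg (div_nonneg hd.le hτm0.le)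
              (div_nonneg hτk.1 hka.le)) hB0ge
          exact mul_nonneg hB0nn' (inv_nonneg.mpr hd.le)
      _ = B0 * ((((m - k + 1 : ℕ) : ℝ))⁻¹ * (c * b)) := by ring
  refine le_trans (Finset.sum_le_sum (fun i hi => Finset.sum_le_sum (key i hi))) ?_
  -- Step 3: the remaining sum is at most B0
  have hB0nn : 0 ≤ B0 := by
    rw [hB0]
    have := Finset.le_sup' (fun k => ((m - k + 1 : ℕ) : ℝ) / (1 - τ m) * (τ k / (k : ℝ)))
      (Finset.mem_Icc.mpr ⟨le_rfl, hm⟩ : (1 : ℕ) ∈ Finset.Icc 1 m)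
    refine le_trans ?_ this
    have h1 := (hτ01 1 hm).1
    positivity
  have hfinal : ∑ i ∈ H0, ∑ k ∈ Finset.Icc 1 m,
      (((m - k + 1 : ℕ) : ℝ))⁻¹
        * (P ((K i) ⁻¹' {k} ∩ (p i) ⁻¹' (Set.Ioi (τ m)))).toReal ≤ 1 := by
    rw [← intEq _ (fun i k => (hBset i k).inter (hCset i)) (fun k => (((m - k + 1 : ℕ) : ℝ))⁻¹)]
    have hle : (fun ω => ∑ i ∈ H0, ∑ k ∈ Finset.Icc 1 m,
        Set.indicator ((K i) ⁻¹' {k} ∩ (p i) ⁻¹' (Set.Ioi (τ m)))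
          (fun _ => (((m - k + 1 : ℕ) : ℝ))⁻¹) ω) ≤ fun _ => (1 : ℝ) := by
      intro ω
      have hrw : ∀ i ∈ H0, ∀ k ∈ Finset.Icc 1 m,
          Set.indicator ((K i) ⁻¹' {k} ∩ (p i) ⁻¹' (Set.Ioi (τ m)))
            (fun _ => (((m - k + 1 : ℕ) : ℝ))⁻¹) ω
          = if numRejSU m τ (Function.update (fun j => p j ω) i 0) = k ∧ τ m < p i ω
              then (((m - k + 1 : ℕ) : ℝ))⁻¹ else 0 := by
        intro i _ k _
        by_cases h : numRejSU m τ (Function.update (fun j => p j ω) i 0) = k ∧ τ m < p i ω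
        · rw [if_pos h]
          exact Set.indicator_of_mem
            (show ω ∈ (K i) ⁻¹' {k} ∩ (p i) ⁻¹' (Set.Ioi (τ m)) from ⟨h.1, h.2⟩)
            (fun _ => (((m - k + 1 : ℕ) : ℝ))⁻¹)
        · rw [if_neg h]
          exact Set.indicator_of_notMem
            (show ω ∉ (K i) ⁻¹' {k} ∩ (p i) ⁻¹' (Set.Ioi (τ m)) from
              fun hc => h ⟨hc.1, hc.2⟩)
            (fun _ => (((m - k + 1 : ℕ) : ℝ))⁻¹)
      calc (∑ i ∈ H0, ∑ k ∈ Finset.Icc 1 m,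
          Set.indicator ((K i) ⁻¹' {k} ∩ (p i) ⁻¹' (Set.Ioi (τ m)))
            (fun _ => (((m - k + 1 : ℕ) : ℝ))⁻¹) ω)
          = ∑ i ∈ H0, ∑ k ∈ Finset.Icc 1 m,
              (if numRejSU m τ (Function.update (fun j => p j ω) i 0) = k ∧ τ m < p i ω
                then (((m - k + 1 : ℕ) : ℝ))⁻¹ else 0) :=
            Finset.sum_congr rfl (fun i hi => Finset.sum_congr rfl (hrw i hi))
        _ ≤ 1 := sumD_le_one hm hτmono hτ01 H0
    calc (∫ ω, ∑ i ∈ H0, ∑ k ∈ Finset.Icc 1 m,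
        Set.indicator ((K i) ⁻¹' {k} ∩ (p i) ⁻¹' (Set.Ioi (τ m)))
          (fun _ => (((m - k + 1 : ℕ) : ℝ))⁻¹) ω ∂P)
        ≤ ∫ _, (1 : ℝ) ∂P := by
          refine integral_mono ?_ (integrable_const 1) hle
          exact integrable_finset_sum _ (fun i _ => integrable_finset_sum _
            (fun k _ => (integrable_const _).indicator ((hBset i k).inter (hCset i))))
      _ = 1 := by simp
  calc ∑ i ∈ H0, ∑ k ∈ Finset.Icc 1 m,
      B0 * ((((m - k + 1 : ℕ) : ℝ))⁻¹
        * (P ((K i) ⁻¹' {k} ∩ (p i) ⁻¹' (Set.Ioi (τ m)))).toReal)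
      = B0 * ∑ i ∈ H0, ∑ k ∈ Finset.Icc 1 m,
          (((m - k + 1 : ℕ) : ℝ))⁻¹
            * (P ((K i) ⁻¹' {k} ∩ (p i) ⁻¹' (Set.Ioi (τ m)))).toReal := by
        rw [Finset.mul_sum]
        refine Finset.sum_congr rfl fun i _ => ?_
        rw [Finset.mul_sum]
    _ ≤ B0 * 1 := mul_le_mul_of_nonneg_left hfinal hB0nn
    _ = B0 := mul_one B0
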